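/- Let S = ⟨a_0,…,a_g⟩ be a numerical semigroup that is free for some arrangement of its generators. Then c(S) = 2·δ(S), where c(S) is the conductor of S and δ(S) is the number of gaps of S, i.e. the cardinality of the finite set ℕ∖S. Equivalently, S is symmetric: for every integer s with 0 ≤ s ≤ c(S) − 1, s ∈ S if and only if c(S) − 1 − s ∉ S. -/
import Mathlib


/-- `eSeq a i = gcd(a 0, …, a i)`. -/
def eSeq (a : ℕ → ℕ) : ℕ → ℕ
  | 0 => a 0
  | i + 1 => Nat.gcd (eSeq a i) (a (i + 1))

/-- `nSeq a i = e_{i-1} / e_i` (intended for `1 ≤ i`). -/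
def nSeq (a : ℕ → ℕ) (i : ℕ) : ℕ := eSeq a (i - 1) / eSeq a i

/-- `gen a i = ⟨a 0, …, a i⟩`, the set of all ℕ-linear combinations. -/
def gen (a : ℕ → ℕ) (i : ℕ) : Set ℕ :=
  {s | ∃ c : ℕ → ℕ, s = ∑ j ∈ Finset.range (i + 1), c j * a j}

/-- The semigroup `S = ⟨a 0, …, a g⟩` is free for the arrangement `(a 0, …, a g)`. -/
def IsFreeArr (a : ℕ → ℕ) (g : ℕ) : Prop :=
  eSeq a g = 1 ∧ ∀ i, 1 ≤ i → i ≤ g → nSeq a i * a i ∈ gen a (i - 1)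

/-- The conductor of a set `T ⊆ ℕ`: the least `c` with `c + ℕ ⊆ T`. -/
noncomputable def conductorOf (T : Set ℕ) : ℕ := sInf {c : ℕ | ∀ m, c ≤ m → m ∈ T}

open Finset

section Aux
variable (a : ℕ → ℕ)

lemma eSeq_dvd_succ (i : ℕ) : eSeq a (i + 1) ∣ eSeq a i := Nat.gcd_dvd_left _ _

lemma eSeq_dvd_apply : ∀ i j, j ≤ i → eSeq a i ∣ a j := by
  intro i
  induction i with
  | zero =>
    intro j hj
    have : j = 0 := by omega
    subst this; exact dvd_refl _
  | succ i ih =>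
    intro j hj
    rcases Nat.lt_or_ge j (i+1) with h | h
    · exact (eSeq_dvd_succ a i).trans (ih j (by omega))
    · have : j = i + 1 := by omega
      subst this; exact Nat.gcd_dvd_right _ _

lemma eSeq_pos (h0 : 0 < a 0) : ∀ i, 0 < eSeq a i := by
  intro i
  induction i with
  | zero => exact h0
  | succ i ih => exact Nat.gcd_pos_of_pos_left _ ih

lemma eSeq_mul_nSeq (i : ℕ) : eSeq a (i + 1) * nSeq a (i + 1) = eSeq a i := by
  show eSeq a (i+1) * (eSeq a i / eSeq a (i+1)) = eSeq a i
  exact Nat.mul_div_cancel' (eSeq_dvd_succ a i)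

lemma nSeq_pos (h0 : 0 < a 0) (i : ℕ) : 0 < nSeq a (i + 1) := by
  have h1 := eSeq_mul_nSeq a i
  have h2 := eSeq_pos a h0 i
  by_contra h
  simp only [not_lt, Nat.le_zero] at h
  rw [h, mul_zero] at h1; omega

lemma eSeq_dvd_zero (i : ℕ) : eSeq a i ∣ a 0 := eSeq_dvd_apply a i 0 (Nat.zero_le _)

lemma eSeq_mul_prod (k : ℕ) : eSeq a k * ∏ i ∈ Icc 1 k, nSeq a i = a 0 := by
  induction k with
  | zero => simp [eSeq]
  | succ k ih =>
    rw [← Finset.insert_Icc_right_eq_Icc_add_one (by omega), Finset.prod_insert (by simp),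
      ← mul_assoc, eSeq_mul_nSeq, ih]

lemma sum_range_eq (f : ℕ → ℕ) (g : ℕ) :
    ∑ j ∈ range (g+1), f j = f 0 + ∑ j ∈ Icc 1 g, f j := by
  induction g with
  | zero => simp
  | succ g ih => rw [Finset.sum_range_succ, ih, ← Finset.insert_Icc_right_eq_Icc_add_one (by omega),
      Finset.sum_insert (by simp)]; ring

/-- canonical sum -/
def sig (g : ℕ) (c : ℕ → ℕ) : ℕ := ∑ i ∈ Icc 1 g, c i * a i

lemma mem_gen_iff (g m : ℕ) :
    m ∈ gen a g ↔ ∃ c : ℕ → ℕ, m = c 0 * a 0 + sig a g c := by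
  unfold gen sig
  constructor
  · rintro ⟨c, rfl⟩; exact ⟨c, sum_range_eq _ g⟩
  · rintro ⟨c, rfl⟩; exact ⟨c, (sum_range_eq (fun j => c j * a j) g).symm⟩

end Aux

section Aux2
variable (a : ℕ → ℕ)

lemma sig_succ (g : ℕ) (c : ℕ → ℕ) :
    sig a (g+1) c = sig a g c + c (g+1) * a (g+1) := by
  unfold sig
  rw [← Finset.insert_Icc_right_eq_Icc_add_one (by omega), Finset.sum_insert (by simp)]; ring

lemma eSeq_dvd_sig (k : ℕ) (c : ℕ → ℕ) : eSeq a k ∣ sig a k c := by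
  refine Finset.dvd_sum fun i hi => Dvd.dvd.mul_left ?_ _
  exact eSeq_dvd_apply a k i (mem_Icc.mp hi).2

lemma sig_unique (h0 : 0 < a 0) : ∀ k, ∀ c c' : ℕ → ℕ,
    (∀ i, 1 ≤ i → i ≤ k → c i < nSeq a i) →
    (∀ i, 1 ≤ i → i ≤ k → c' i < nSeq a i) →
    ((a 0 : ℤ) ∣ (sig a k c : ℤ) - (sig a k c' : ℤ)) →
    ∀ i, 1 ≤ i → i ≤ k → c i = c' i := by
  intro k
  induction k with
  | zero => intro c c' _ _ _ i h1 h2; omega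
  | succ k ih =>
    intro c c' hc hc' hdvd i h1 h2
    -- first show c (k+1) = c' (k+1)
    have hek : (eSeq a k : ℤ) ∣ (sig a k c : ℤ) := Int.natCast_dvd_natCast.mpr (eSeq_dvd_sig a k c)
    have hek' : (eSeq a k : ℤ) ∣ (sig a k c' : ℤ) := Int.natCast_dvd_natCast.mpr (eSeq_dvd_sig a k c')
    have he0 : (eSeq a k : ℤ) ∣ (a 0 : ℤ) := Int.natCast_dvd_natCast.mpr (eSeq_dvd_zero a k)
    rw [sig_succ, sig_succ] at hdvd
    push_cast at hdvd
    have key : (eSeq a k : ℤ) ∣ ((c (k+1) : ℤ) - (c' (k+1) : ℤ)) * (a (k+1) : ℤ) := by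
      have h1 : (eSeq a k : ℤ) ∣ (sig a k c : ℤ) + c (k+1) * a (k+1)
          - ((sig a k c' : ℤ) + c' (k+1) * a (k+1)) := he0.trans hdvd
      have : ((c (k+1) : ℤ) - (c' (k+1) : ℤ)) * (a (k+1) : ℤ)
          = ((sig a k c : ℤ) + c (k+1) * a (k+1) - ((sig a k c' : ℤ) + c' (k+1) * a (k+1)))
            - (sig a k c : ℤ) + (sig a k c' : ℤ) := by ring
      rw [this]
      exact dvd_add (dvd_sub h1 hek) hek'
    set e := eSeq a (k+1) with hedef
    have hepos : 0 < e := eSeq_pos a h0 (k+1)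
    have hgcd : Nat.gcd (eSeq a k) (a (k+1)) = e := rfl
    have hn : eSeq a k = e * nSeq a (k+1) := (eSeq_mul_nSeq a k).symm
    have hb : a (k+1) = e * (a (k+1) / e) := (Nat.div_mul_cancel (hgcd ▸ Nat.gcd_dvd_right _ _)).symm.trans (mul_comm _ _)
    have hcop : Nat.Coprime (nSeq a (k+1)) (a (k+1) / e) := by
      have := Nat.coprime_div_gcd_div_gcd (m := eSeq a k) (n := a (k+1)) (hgcd ▸ hepos)
      rwa [hgcd] at this
    have hkey2 : (nSeq a (k+1) : ℤ) ∣ ((c (k+1) : ℤ) - (c' (k+1) : ℤ)) * ((a (k+1) / e : ℕ) : ℤ) := by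
      have h2 : ((e * nSeq a (k+1) : ℕ) : ℤ) ∣ ((c (k+1) : ℤ) - (c' (k+1) : ℤ)) * ((e * (a (k+1) / e) : ℕ) : ℤ) := by
        rw [← hn, ← hb]; exact key
      rw [Nat.cast_mul, Nat.cast_mul] at h2
      have hene : (e : ℤ) ≠ 0 := by exact_mod_cast hepos.ne'
      rcases h2 with ⟨t, ht⟩
      refine ⟨t, ?_⟩
      have : (e : ℤ) * (((c (k+1) : ℤ) - (c' (k+1) : ℤ)) * ((a (k+1) / e : ℕ) : ℤ))
          = (e : ℤ) * ((nSeq a (k+1) : ℤ) * t) := by linarith [ht]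
      exact mul_left_cancel₀ hene this
    have hdvdn : (nSeq a (k+1) : ℤ) ∣ ((c (k+1) : ℤ) - (c' (k+1) : ℤ)) :=
      (Nat.isCoprime_iff_coprime.mpr hcop).dvd_of_dvd_mul_right hkey2
    have hceq : c (k+1) = c' (k+1) := by
      have hlt := hc (k+1) (by omega) (by omega)
      have hlt' := hc' (k+1) (by omega) (by omega)
      have := Int.eq_zero_of_abs_lt_dvd hdvdn (by
        rw [abs_sub_lt_iff]; constructor <;> omega)
      omega
    rcases Nat.lt_or_ge i (k+1) with h | h
    · refine ih c c' (fun j hj1 hj2 => hc j hj1 (by omega)) (fun j hj1 hj2 => hc' j hj1 (by omega)) ?_ i h1 (by omega)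
      have : (sig a k c : ℤ) - (sig a k c' : ℤ)
          = ((sig a k c : ℤ) + c (k+1) * a (k+1)) - ((sig a k c' : ℤ) + c' (k+1) * a (k+1)) := by
        rw [hceq]; ring
      rw [this]; exact hdvd
    · have : i = k+1 := by omega
      subst this; exact hceq

end Aux2

section Aux3
variable (a : ℕ → ℕ)

lemma sig_congr {g : ℕ} {c c' : ℕ → ℕ} (h : ∀ i, 1 ≤ i → i ≤ g → c i = c' i) :
    sig a g c = sig a g c' :=
  Finset.sum_congr rfl fun i hi => by
    rw [h i (mem_Icc.mp hi).1 (mem_Icc.mp hi).2]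

lemma gen_add {g x y : ℕ} (hx : x ∈ gen a g) (hy : y ∈ gen a g) : x + y ∈ gen a g := by
  obtain ⟨c, rfl⟩ := hx
  obtain ⟨d, rfl⟩ := hy
  exact ⟨fun i => c i + d i, by rw [← Finset.sum_add_distrib]; exact Finset.sum_congr rfl fun i _ => by ring⟩

lemma gen_smul {g x : ℕ} (k : ℕ) (hx : x ∈ gen a g) : k * x ∈ gen a g := by
  obtain ⟨c, rfl⟩ := hx
  exact ⟨fun i => k * c i, by rw [Finset.mul_sum]; exact Finset.sum_congr rfl fun i _ => by ring⟩

lemma reduce (h0 : 0 < a 0) : ∀ g, (∀ i, 1 ≤ i → i ≤ g → nSeq a i * a i ∈ gen a (i - 1)) →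
    ∀ m ∈ gen a g, ∃ c : ℕ → ℕ,
      (∀ i, 1 ≤ i → i ≤ g → c i < nSeq a i) ∧ ∃ k, m = k * a 0 + sig a g c := by
  intro g
  induction g with
  | zero =>
    rintro _ m ⟨c, rfl⟩
    refine ⟨fun _ => 0, fun i h1 h2 => by omega, c 0, ?_⟩
    simp [sig]
  | succ g ih =>
    intro hf m hm
    rw [mem_gen_iff] at hm
    obtain ⟨c, rfl⟩ := hm
    set n := nSeq a (g+1) with hndef
    have hnpos : 0 < n := nSeq_pos a h0 g
    obtain ⟨q, r, hr, hqr⟩ : ∃ q r, r < n ∧ c (g+1) = n * q + r :=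
      ⟨c (g+1) / n, c (g+1) % n, Nat.mod_lt _ hnpos, (Nat.div_add_mod _ _).symm⟩
    have hna : n * a (g+1) ∈ gen a g := by
      have := hf (g+1) (by omega) (by omega)
      simpa using this
    have hm' : c 0 * a 0 + sig a g c + q * (n * a (g+1)) ∈ gen a g := by
      refine gen_add a (gen_add a ?_ ?_) (gen_smul a q hna)
      · refine (mem_gen_iff a g _).mpr ⟨fun i => if i = 0 then c 0 else 0, ?_⟩
        have e1 : (if (0:ℕ) = 0 then c 0 else 0) = c 0 := if_pos rfl
        have e2 : sig a g (fun i => if i = 0 then c 0 else 0) = 0 :=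
          Finset.sum_eq_zero fun i hi => by
            show (if i = 0 then c 0 else 0) * a i = 0
            rw [if_neg (by have := (mem_Icc.mp hi).1; omega), zero_mul]
        show c 0 * a 0 = (if (0:ℕ) = 0 then c 0 else 0) * a 0 + sig a g (fun i => if i = 0 then c 0 else 0)
        rw [e1, e2, add_zero]
      · refine (mem_gen_iff a g _).mpr ⟨fun i => if i = 0 then 0 else c i, ?_⟩
        have e1 : (if (0:ℕ) = 0 then 0 else c 0) = 0 := if_pos rfl
        have e2 : sig a g (fun i => if i = 0 then 0 else c i) = sig a g c :=
          (sig_congr a fun i hi1 hi2 => by rw [if_neg (by omega)]).symm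
        show sig a g c = (if (0:ℕ) = 0 then 0 else c 0) * a 0 + sig a g (fun i => if i = 0 then 0 else c i)
        rw [e1, e2, zero_mul, zero_add]
    obtain ⟨c', hc', k, hk⟩ := ih (fun i h1 h2 => hf i h1 (by omega)) _ hm'
    refine ⟨fun i => if i = g+1 then r else c' i, ?_, k, ?_⟩
    · intro i h1 h2
      show (if i = g+1 then r else c' i) < nSeq a i
      by_cases hi : i = g+1
      · subst hi; rw [if_pos rfl]; exact hr
      · rw [if_neg hi]; exact hc' i h1 (by omega)
    · have hsig : sig a (g+1) (fun i => if i = g+1 then r else c' i)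
          = sig a g c' + r * a (g+1) := by
        rw [sig_succ]
        have e1 : (if g+1 = g+1 then r else c' (g+1)) = r := if_pos rfl
        have e2 : sig a g (fun i => if i = g+1 then r else c' i) = sig a g c' :=
          sig_congr a fun i hi1 hi2 => by rw [if_neg (by omega)]
        show sig a g (fun i => if i = g+1 then r else c' i) + (if g+1 = g+1 then r else c' (g+1)) * a (g+1) = _
        rw [e1, e2]
      rw [hsig, sig_succ]
      have : c (g+1) * a (g+1) = q * (n * a (g+1)) + r * a (g+1) := by rw [hqr]; ring
      omega

lemma bezout : ∀ g, ∃ z : ℕ → ℤ, (eSeq a g : ℤ) = ∑ j ∈ range (g+1), z j * a j := by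
  intro g
  induction g with
  | zero => exact ⟨fun _ => 1, by simp [eSeq]⟩
  | succ g ih =>
    obtain ⟨z, hz⟩ := ih
    have hgcd : (eSeq a (g+1) : ℤ)
        = (eSeq a g) * Nat.gcdA (eSeq a g) (a (g+1)) + (a (g+1)) * Nat.gcdB (eSeq a g) (a (g+1)) := by
      exact_mod_cast Nat.gcd_eq_gcd_ab (eSeq a g) (a (g+1))
    refine ⟨fun j => if j = g+1 then Nat.gcdB (eSeq a g) (a (g+1))
      else z j * Nat.gcdA (eSeq a g) (a (g+1)), ?_⟩
    rw [Finset.sum_range_succ, hgcd, hz, Finset.sum_mul]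
    congr 1
    · refine Finset.sum_congr rfl fun j hj => ?_
      show z j * (a j : ℤ) * _ = (if j = g+1 then _ else z j * _) * (a j : ℤ)
      rw [if_neg (by simp at hj; omega)]; ring
    · show (a (g+1) : ℤ) * _ = (if g+1 = g+1 then _ else _) * (a (g+1) : ℤ)
      rw [if_pos rfl]; ring

end Aux3

section Aux4
variable (a : ℕ → ℕ)

lemma exists_residue (g : ℕ) (h0 : 0 < a 0) (h1 : eSeq a g = 1) (m : ℕ) :
    ∃ x ∈ gen a g, (a 0 : ℤ) ∣ (x : ℤ) - m := by
  obtain ⟨z, hz⟩ := bezout a g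
  rw [h1] at hz
  set c : ℕ → ℕ := fun j => if j = 0 then 0 else ((m * z j) % (a 0 : ℤ)).toNat with hc
  refine ⟨∑ j ∈ range (g+1), c j * a j, ⟨c, rfl⟩, ?_⟩
  have ha0 : ((a 0 : ℤ)) ≠ 0 := by exact_mod_cast h0.ne'
  have hm : (m : ℤ) = ∑ j ∈ range (g+1), (m * z j) * a j := by
    calc (m : ℤ) = m * 1 := by ring
    _ = m * ∑ j ∈ range (g+1), z j * a j := by rw [← hz]; norm_num
    _ = ∑ j ∈ range (g+1), (m * z j) * a j := by rw [Finset.mul_sum]; exact Finset.sum_congr rfl fun j _ => by ring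
  have hx : ((∑ j ∈ range (g+1), c j * a j : ℕ) : ℤ) = ∑ j ∈ range (g+1), (c j : ℤ) * a j := by
    push_cast; rfl
  rw [hx, hm, ← Finset.sum_sub_distrib]
  refine Finset.dvd_sum fun j hj => ?_
  rcases eq_or_ne j 0 with rfl | hj0
  · have : (c 0 : ℤ) = 0 := by simp [hc]
    rw [this]
    exact ⟨-(m * z 0) * a 0 / a 0 * 0 + -(m * z 0), by ring⟩
  · have hcj : (c j : ℤ) = (m * z j) % (a 0 : ℤ) := by
      rw [hc]
      simp only [if_neg hj0]
      exact Int.toNat_of_nonneg (Int.emod_nonneg _ ha0)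
    have : (a 0 : ℤ) ∣ (c j : ℤ) - m * z j := by
      rw [hcj, Int.emod_def]
      exact ⟨-( (m * z j) / a 0), by ring⟩
    rcases this with ⟨t, ht⟩
    refine ⟨t * a j, ?_⟩
    have : ((c j : ℤ) - m * z j) * a j = (a 0 : ℤ) * t * a j := by rw [ht]
    linear_combination this

lemma exists_canon (g : ℕ) (h0 : 0 < a 0) (hfree : IsFreeArr a g) (m : ℕ) :
    ∃ c : ℕ → ℕ, (∀ i, 1 ≤ i → i ≤ g → c i < nSeq a i) ∧
      (a 0 : ℤ) ∣ (sig a g c : ℤ) - m := by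
  obtain ⟨x, hx, hdvd⟩ := exists_residue a g h0 hfree.1 m
  obtain ⟨c, hc, k, hk⟩ := reduce a h0 g hfree.2 x hx
  refine ⟨c, hc, ?_⟩
  have : (sig a g c : ℤ) - m = ((x : ℤ) - m) - k * a 0 := by
    have : (x : ℤ) = k * a 0 + sig a g c := by exact_mod_cast hk
    rw [this]; ring
  rw [this]
  exact dvd_sub hdvd ⟨k, by ring⟩

lemma mem_iff (g : ℕ) (h0 : 0 < a 0) (hfree : IsFreeArr a g) (m : ℕ) (c : ℕ → ℕ)
    (hc : ∀ i, 1 ≤ i → i ≤ g → c i < nSeq a i)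
    (hdvd : (a 0 : ℤ) ∣ (m : ℤ) - sig a g c) :
    m ∈ gen a g ↔ sig a g c ≤ m := by
  constructor
  · intro hm
    obtain ⟨c', hc', k, hk⟩ := reduce a h0 g hfree.2 m hm
    have hdd : (a 0 : ℤ) ∣ (sig a g c' : ℤ) - sig a g c := by
      have hmz : (m : ℤ) = k * a 0 + sig a g c' := by exact_mod_cast hk
      have : (sig a g c' : ℤ) - sig a g c = ((m : ℤ) - sig a g c) - k * a 0 := by
        rw [hmz]; ring
      rw [this]
      exact dvd_sub hdvd ⟨k, by ring⟩
    have heq := sig_unique a h0 g c' c hc' hc hdd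
    have : sig a g c = sig a g c' := (sig_congr a heq).symm
    omega
  · intro hle
    obtain ⟨t, ht⟩ := hdvd
    have ht0 : 0 ≤ t := by
      nlinarith [ht, (by exact_mod_cast hle : (sig a g c : ℤ) ≤ m), (by exact_mod_cast h0 : (0:ℤ) < a 0)]
    have hmk : m = t.toNat * a 0 + sig a g c := by
      have : (m : ℤ) = (t.toNat : ℤ) * a 0 + sig a g c := by
        rw [Int.toNat_of_nonneg ht0]; linarith [ht]
      exact_mod_cast this
    refine (mem_gen_iff a g m).mpr ⟨fun i => if i = 0 then t.toNat else c i, ?_⟩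
    have e1 : (if (0:ℕ) = 0 then t.toNat else c 0) = t.toNat := if_pos rfl
    have e2 : sig a g (fun i => if i = 0 then t.toNat else c i) = sig a g c :=
      sig_congr a fun i h1 h2 => by rw [if_neg (by omega)]
    show m = (if (0:ℕ) = 0 then t.toNat else c 0) * a 0 + sig a g (fun i => if i = 0 then t.toNat else c i)
    rw [e1, e2]; exact hmk

end Aux4


theorem stmt_9 (g : ℕ) (a : ℕ → ℕ) (hpos : ∀ i, i ≤ g → 0 < a i)
    (hfree : IsFreeArr a g) :
    conductorOf (gen a g) = 2 * Set.ncard {m : ℕ | m ∉ gen a g} ∧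
    ∀ s : ℕ, (s : ℤ) ≤ (conductorOf (gen a g) : ℤ) - 1 →
      (s ∈ gen a g ↔ (conductorOf (gen a g) - 1 - s) ∉ gen a g) := by
  classical
  have h0 : 0 < a 0 := hpos 0 (Nat.zero_le _)
  set W := sig a g (fun i => nSeq a i - 1) with hW
  have hnpos : ∀ i, 1 ≤ i → 0 < nSeq a i := fun i hi => by
    obtain ⟨j, rfl⟩ : ∃ j, i = j + 1 := ⟨i - 1, by omega⟩
    exact nSeq_pos a h0 j
  have hWcanon : ∀ i, 1 ≤ i → i ≤ g → nSeq a i - 1 < nSeq a i := fun i hi _ => by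
    have := hnpos i hi; omega
  have hsig_le : ∀ c : ℕ → ℕ, (∀ i, 1 ≤ i → i ≤ g → c i < nSeq a i) → sig a g c ≤ W := by
    intro c hc
    refine Finset.sum_le_sum fun i hi => ?_
    have h1 := (mem_Icc.mp hi).1; have h2 := (mem_Icc.mp hi).2
    show c i * a i ≤ (nSeq a i - 1) * a i
    exact Nat.mul_le_mul_right _ (by have := hc i h1 h2; omega)
  have hcomp : ∀ c : ℕ → ℕ, (∀ i, 1 ≤ i → i ≤ g → c i < nSeq a i) →
      sig a g c + sig a g (fun i => nSeq a i - 1 - c i) = W := by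
    intro c hc
    rw [hW]
    unfold sig
    rw [← Finset.sum_add_distrib]
    refine Finset.sum_congr rfl fun i hi => ?_
    have h1 := (mem_Icc.mp hi).1; have h2 := (mem_Icc.mp hi).2
    have := hc i h1 h2
    show c i * a i + (nSeq a i - 1 - c i) * a i = (nSeq a i - 1) * a i
    rw [← Nat.add_mul]
    congr 1; omega
  have hWge : a 0 - 1 ≤ W := by
    obtain ⟨cw, hcw, hcwd⟩ := exists_canon a g h0 hfree (a 0 - 1)
    have h1 : sig a g cw ≤ W := hsig_le cw hcw
    by_contra hlt
    push_neg at hlt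
    have h2 : sig a g cw < a 0 - 1 := by omega
    have := Int.eq_zero_of_abs_lt_dvd hcwd (by
      rw [abs_sub_lt_iff]; constructor <;> omega)
    omega
  have hc0mem : ∀ m, W + 1 - a 0 ≤ m → m ∈ gen a g := by
    intro m hm
    obtain ⟨c, hcc, hcd⟩ := exists_canon a g h0 hfree m
    have h1 : sig a g c ≤ W := hsig_le c hcc
    have h2 : sig a g c ≤ m := by
      by_contra hgt
      push_neg at hgt
      have hpos' : (0:ℤ) < (sig a g c : ℤ) - m := by
        have : (m:ℤ) < sig a g c := by exact_mod_cast hgt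
        omega
      have := Int.le_of_dvd hpos' hcd
      omega
    have hdvd' : (a 0 : ℤ) ∣ (m : ℤ) - sig a g c := by
      rw [show (m:ℤ) - sig a g c = -((sig a g c : ℤ) - m) by ring]
      exact dvd_neg.mpr hcd
    exact (mem_iff a g h0 hfree m c hcc hdvd').mpr h2
  have hFnot : a 0 ≤ W → (W - a 0) ∉ gen a g := by
    intro hle hmem
    have hdvd : (a 0:ℤ) ∣ ((W - a 0 : ℕ):ℤ) - (sig a g (fun i => nSeq a i - 1) : ℤ) := by
      rw [← hW]
      refine ⟨-1, ?_⟩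
      have e1 : ((W - a 0 : ℕ):ℤ) = (W:ℤ) - a 0 := by omega
      rw [e1]; ring
    have := (mem_iff a g h0 hfree (W - a 0) _ hWcanon hdvd).mp hmem
    rw [← hW] at this
    omega
  have hcond : conductorOf (gen a g) = W + 1 - a 0 := by
    unfold conductorOf
    apply le_antisymm
    · exact Nat.sInf_le hc0mem
    · refine le_csInf ⟨_, hc0mem⟩ fun b hb => ?_
      by_contra hlt
      push_neg at hlt
      have h1 : a 0 ≤ W := by omega
      have h2 : b ≤ W - a 0 := by omega
      exact hFnot h1 (hb _ h2)
  have hsym : ∀ s : ℕ, s < W + 1 - a 0 → (s ∈ gen a g ↔ (W - a 0 - s) ∉ gen a g) := by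
    intro s hs
    have hW0 : a 0 ≤ W := by omega
    have hsle : s ≤ W - a 0 := by omega
    obtain ⟨c, hcc, hcd⟩ := exists_canon a g h0 hfree s
    have hle1 : sig a g c ≤ W := hsig_le c hcc
    have hcompc := hcomp c hcc
    have hcanon2 : ∀ i, 1 ≤ i → i ≤ g → (nSeq a i - 1 - c i) < nSeq a i := fun i h1 h2 => by
      have := hnpos i h1; omega
    have hdvd1 : (a 0 : ℤ) ∣ (s : ℤ) - sig a g c := by
      rw [show (s:ℤ) - sig a g c = -((sig a g c : ℤ) - s) by ring]
      exact dvd_neg.mpr hcd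
    have hmem1 : s ∈ gen a g ↔ sig a g c ≤ s := mem_iff a g h0 hfree s c hcc hdvd1
    have hdvd2 : (a 0:ℤ) ∣ ((W - a 0 - s : ℕ):ℤ) - (sig a g (fun i => nSeq a i - 1 - c i) : ℤ) := by
      obtain ⟨t, ht⟩ := hcd
      refine ⟨t - 1, ?_⟩
      have e1 : ((W - a 0 - s : ℕ):ℤ) = (W:ℤ) - a 0 - s := by omega
      have e2 : (sig a g (fun i => nSeq a i - 1 - c i) : ℤ) = (W:ℤ) - sig a g c := by omega
      rw [e1, e2]; linarith [ht]
    have hmem2 : (W - a 0 - s) ∈ gen a g ↔ sig a g (fun i => nSeq a i - 1 - c i) ≤ W - a 0 - s :=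
      mem_iff a g h0 hfree _ _ hcanon2 hdvd2
    rw [hmem1, hmem2]
    constructor
    · intro h hcontra
      omega
    · intro h
      by_contra hgt
      push_neg at hgt
      have hpos' : (0:ℤ) < (sig a g c:ℤ) - s := by
        have : (s:ℤ) < sig a g c := by exact_mod_cast hgt
        omega
      have hge := Int.le_of_dvd hpos' hcd
      apply h
      omega
  have hc0key : W + 1 - a 0 - 1 = W - a 0 := by omega
  constructor
  · rw [hcond]
    set c0 := W + 1 - a 0 with hc0def
    have hnotmem_lt : ∀ m, m ∉ gen a g → m < c0 := fun m hm => by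
      by_contra h; push_neg at h; exact hm (hc0mem m h)
    have hGset : {m : ℕ | m ∉ gen a g} = ↑((range c0).filter (fun m => m ∉ gen a g)) := by
      ext m
      simp only [Set.mem_setOf_eq, coe_filter, mem_range, Set.mem_setOf_eq]
      exact ⟨fun h => ⟨hnotmem_lt m h, h⟩, fun h => h.2⟩
    rw [hGset, Set.ncard_coe_finset]
    have hcard : ((range c0).filter (fun m => m ∈ gen a g)).card
        + ((range c0).filter (fun m => m ∉ gen a g)).card = c0 := by
      rw [Finset.card_filter_add_card_filter_not, Finset.card_range]
    have hbij : ((range c0).filter (fun m => m ∉ gen a g)).card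
        = ((range c0).filter (fun m => m ∈ gen a g)).card := by
      refine Finset.card_bij (fun m _ => c0 - 1 - m) ?_ ?_ ?_
      · intro m hm
        simp only [mem_filter, mem_range] at hm ⊢
        obtain ⟨h1, h2⟩ := hm
        refine ⟨by omega, ?_⟩
        have hsm := hsym m h1
        have : W - a 0 - m ∈ gen a g := by
          by_contra hno
          exact h2 (hsm.mpr hno)
        have he : c0 - 1 - m = W - a 0 - m := by omega
        rwa [he]
      · intro m hm m' hm' hee
        simp only [mem_filter, mem_range] at hm hm'
        have : c0 - 1 - m = c0 - 1 - m' := hee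
        omega
      · intro e he
        simp only [mem_filter, mem_range] at he
        obtain ⟨h1, h2⟩ := he
        refine ⟨c0 - 1 - e, ?_, by show c0 - 1 - (c0 - 1 - e) = e; omega⟩
        simp only [mem_filter, mem_range]
        refine ⟨by omega, ?_⟩
        intro hmem
        have hsm := hsym (c0 - 1 - e) (by omega)
        have : W - a 0 - (c0 - 1 - e) ∉ gen a g := hsm.mp hmem
        have he2 : W - a 0 - (c0 - 1 - e) = e := by omega
        rw [he2] at this
        exact this h2
    omega
  · intro s hs
    rw [hcond] at hs ⊢
    have hs' : s < W + 1 - a 0 := by omega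
    have he : W + 1 - a 0 - 1 - s = W - a 0 - s := by omega
    rw [he]
    exact hsym s hs'
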